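/- Let e be a finite Borel measure on [0, ∞) and let α > 1. Suppose there exists C > 0 such that for all δ > 0, ∫_{[0,δ]} λ^{−1} de(λ) ≤ C δ^{α − 1} (this forces e({0}) = 0). Then there exists C′ > 0 such that for all t > 0: ∫ (1 − e^{−λ t}) / (λ² t) de(λ) ≤ C′ / ψ_α(t), where ψ_α(t) = t^{α−1} if 1 < α < 2, ψ_α(t) = t / max(1, ln t) if α = 2, and ψ_α(t) = t if α > 2. -/

import Mathlib

open MeasureTheory ENNReal
open scoped ENNReal

/-- `ψ_α(t)`: `t^{α-1}` if `α < 2`, `t/ln_+ t` if `α = 2`, `t` if `α > 2`. -/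
noncomputable def psi (α t : ℝ) : ℝ :=
  if α < 2 then t ^ (α - 1) else if α = 2 then t / max 1 (Real.log t) else t

open Set

noncomputable def G (l : ℝ) : ℝ≥0∞ := (ENNReal.ofReal l)⁻¹
noncomputable def F (l : ℝ) : ℝ≥0∞ := ((ENNReal.ofReal l) ^ 2)⁻¹

lemma measurable_G : Measurable G := (ENNReal.measurable_ofReal.comp measurable_id).inv

lemma measurable_F : Measurable F :=
  ((ENNReal.measurable_ofReal.comp measurable_id).pow_const 2).inv

lemma pointwise_head {l t : ℝ} (hl : 0 ≤ l) (ht : 0 < t) :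
    ENNReal.ofReal ((1 - Real.exp (-l * t)) / (l ^ 2 * t)) ≤ G l := by
  rcases eq_or_lt_of_le hl with rfl | hl
  · simp [G]
  · have h1 : (1 - Real.exp (-l * t)) / (l ^ 2 * t) ≤ l⁻¹ := by
      rw [div_le_iff₀ (by positivity)]
      have := Real.add_one_le_exp (-l * t)
      have : 1 - Real.exp (-l * t) ≤ l * t := by nlinarith
      calc 1 - Real.exp (-l * t) ≤ l * t := this
        _ = l⁻¹ * (l ^ 2 * t) := by field_simp
    calc ENNReal.ofReal _ ≤ ENNReal.ofReal l⁻¹ := ENNReal.ofReal_le_ofReal h1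
      _ = G l := by rw [G, ENNReal.ofReal_inv_of_pos hl]

lemma pointwise_tail {l t : ℝ} (hl : 0 < l) (ht : 0 < t) :
    ENNReal.ofReal ((1 - Real.exp (-l * t)) / (l ^ 2 * t)) ≤ (ENNReal.ofReal t)⁻¹ * F l := by
  have h1 : (1 - Real.exp (-l * t)) / (l ^ 2 * t) ≤ (l ^ 2 * t)⁻¹ := by
    rw [div_eq_mul_inv]
    have : 1 - Real.exp (-l * t) ≤ 1 := by
      have := Real.exp_nonneg (-l * t); linarith
    calc (1 - Real.exp (-l * t)) * (l ^ 2 * t)⁻¹ ≤ 1 * (l ^ 2 * t)⁻¹ :=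
          mul_le_mul_of_nonneg_right this (by positivity)
      _ = (l ^ 2 * t)⁻¹ := one_mul _
  calc ENNReal.ofReal _ ≤ ENNReal.ofReal (l ^ 2 * t)⁻¹ := ENNReal.ofReal_le_ofReal h1
    _ = (ENNReal.ofReal (l ^ 2 * t))⁻¹ := ENNReal.ofReal_inv_of_pos (by positivity)
    _ = ((ENNReal.ofReal l) ^ 2 * ENNReal.ofReal t)⁻¹ := by
        rw [ENNReal.ofReal_mul (by positivity), ENNReal.ofReal_pow hl.le]
    _ = (ENNReal.ofReal t)⁻¹ * F l := by
        rw [F, ENNReal.mul_inv (Or.inl (by positivity)) (Or.inl (by simp)), mul_comm]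

lemma split_bound (e : Measure ℝ) (he : e (Set.Iio 0) = 0)
    {t δ : ℝ} (ht : 0 < t) (hδ : 0 < δ) :
    ∫⁻ l, ENNReal.ofReal ((1 - Real.exp (-l * t)) / (l ^ 2 * t)) ∂e ≤
      (∫⁻ l in Set.Icc 0 δ, G l ∂e) +
        (ENNReal.ofReal t)⁻¹ * ∫⁻ l in Set.Ioi δ, F l ∂e := by
  have hae : ∀ᵐ l ∂e, 0 ≤ l := by
    rw [ae_iff]
    convert he using 2
    ext l; simp [Set.mem_Iio]
  have hbound : ∀ᵐ l ∂e,
      ENNReal.ofReal ((1 - Real.exp (-l * t)) / (l ^ 2 * t)) ≤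
        (Set.Icc 0 δ).indicator G l +
          (Set.Ioi δ).indicator (fun l => (ENNReal.ofReal t)⁻¹ * F l) l := by
    filter_upwards [hae] with l hl
    rcases le_or_gt l δ with hle | hgt
    · rw [Set.indicator_of_mem (Set.mem_Icc.2 ⟨hl, hle⟩)]
      exact le_add_right (pointwise_head hl ht)
    · rw [Set.indicator_of_mem (Set.mem_Ioi.2 hgt)]
      exact le_add_left (pointwise_tail (hδ.trans hgt) ht)
  calc ∫⁻ l, ENNReal.ofReal ((1 - Real.exp (-l * t)) / (l ^ 2 * t)) ∂e
      ≤ ∫⁻ l, ((Set.Icc 0 δ).indicator G l +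
          (Set.Ioi δ).indicator (fun l => (ENNReal.ofReal t)⁻¹ * F l) l) ∂e :=
        lintegral_mono_ae hbound
    _ = (∫⁻ l, (Set.Icc 0 δ).indicator G l ∂e) +
        ∫⁻ l, (Set.Ioi δ).indicator (fun l => (ENNReal.ofReal t)⁻¹ * F l) l ∂e := by
        refine lintegral_add_left ?_ _
        exact measurable_G.indicator measurableSet_Icc
    _ = (∫⁻ l in Set.Icc 0 δ, G l ∂e) +
        ∫⁻ l in Set.Ioi δ, (ENNReal.ofReal t)⁻¹ * F l ∂e := by
        rw [lintegral_indicator measurableSet_Icc, lintegral_indicator measurableSet_Ioi]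
    _ = (∫⁻ l in Set.Icc 0 δ, G l ∂e) +
        (ENNReal.ofReal t)⁻¹ * ∫⁻ l in Set.Ioi δ, F l ∂e := by
        rw [lintegral_const_mul _ measurable_F]

section Dyadic

variable (e : Measure ℝ) (α C : ℝ) (hC : 0 < C)
variable (h : ∀ δ : ℝ, 0 < δ →
      ∫⁻ l in Set.Icc (0 : ℝ) δ, (ENNReal.ofReal l)⁻¹ ∂e ≤
        ENNReal.ofReal (C * δ ^ (α - 1)))

include hC h

lemma sum_nonneg_aux (n : ℕ) : (0:ℝ) ≤ ∑ k ∈ Finset.range n, ((2:ℝ) ^ (α - 2)) ^ k :=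
  Finset.sum_nonneg fun k _ => by positivity

omit hC h in
lemma block_bound' : True := trivial

lemma block_bound {a : ℝ} (ha : 0 < a) :
    ∫⁻ l in Set.Ioc a (2 * a), F l ∂e ≤
      ENNReal.ofReal (C * 2 ^ (α - 1) * a ^ (α - 2)) := by
  have step1 : ∫⁻ l in Set.Ioc a (2 * a), F l ∂e ≤
      ∫⁻ l in Set.Ioc a (2 * a), ENNReal.ofReal a⁻¹ * G l ∂e := by
    refine setLIntegral_mono (measurable_const.mul measurable_G) ?_
    intro l hl
    have hla : a < l := hl.1
    have hl0 : 0 < l := ha.trans hla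
    have : (ENNReal.ofReal l)⁻¹ ≤ ENNReal.ofReal a⁻¹ := by
      rw [ENNReal.ofReal_inv_of_pos ha]
      exact ENNReal.inv_le_inv.2 (ENNReal.ofReal_le_ofReal hla.le)
    calc F l = (ENNReal.ofReal l)⁻¹ * (ENNReal.ofReal l)⁻¹ := by
          rw [F, pow_two, ENNReal.mul_inv (Or.inl (by simp [hl0])) (Or.inl (by simp))]
      _ ≤ ENNReal.ofReal a⁻¹ * G l := by
          exact mul_le_mul_left this _
  have step2 : ∫⁻ l in Set.Ioc a (2 * a), ENNReal.ofReal a⁻¹ * G l ∂e =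
      ENNReal.ofReal a⁻¹ * ∫⁻ l in Set.Ioc a (2 * a), G l ∂e :=
    lintegral_const_mul _ measurable_G
  have step3 : ∫⁻ l in Set.Ioc a (2 * a), G l ∂e ≤
      ∫⁻ l in Set.Icc 0 (2 * a), G l ∂e := by
    refine lintegral_mono_set ?_
    intro l hl
    exact ⟨(ha.trans hl.1).le, hl.2⟩
  have step4 := h (2 * a) (by positivity)
  calc ∫⁻ l in Set.Ioc a (2 * a), F l ∂e
      ≤ ENNReal.ofReal a⁻¹ * ∫⁻ l in Set.Ioc a (2 * a), G l ∂e := step1.trans_eq step2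
    _ ≤ ENNReal.ofReal a⁻¹ * ENNReal.ofReal (C * (2 * a) ^ (α - 1)) :=
        mul_le_mul_right (step3.trans step4) _
    _ = ENNReal.ofReal (a⁻¹ * (C * (2 * a) ^ (α - 1))) :=
        (ENNReal.ofReal_mul (by positivity)).symm
    _ ≤ ENNReal.ofReal (C * 2 ^ (α - 1) * a ^ (α - 2)) := by
        apply ENNReal.ofReal_le_ofReal
        rw [Real.mul_rpow (by norm_num) ha.le]
        have h1 : a⁻¹ * a ^ (α - 1) = a ^ (α - 2) := by
          rw [← Real.rpow_neg_one a, ← Real.rpow_add ha]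
          congr 1; ring
        refine le_of_eq ?_
        calc a⁻¹ * (C * ((2:ℝ) ^ (α - 1) * a ^ (α - 1)))
            = C * 2 ^ (α - 1) * (a⁻¹ * a ^ (α - 1)) := by ring
          _ = C * 2 ^ (α - 1) * a ^ (α - 2) := by rw [h1]

lemma chain_bound {δ : ℝ} (hδ : 0 < δ) (n : ℕ) :
    ∫⁻ l in Set.Ioc δ (δ * 2 ^ n), F l ∂e ≤
      ENNReal.ofReal (C * 2 ^ (α - 1) * δ ^ (α - 2) *
        ∑ k ∈ Finset.range n, ((2:ℝ) ^ (α - 2)) ^ k) := by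
  induction n with
  | zero => simp
  | succ n ih =>
      have hsub : Set.Ioc δ (δ * 2 ^ (n + 1)) ⊆
          Set.Ioc δ (δ * 2 ^ n) ∪ Set.Ioc (δ * 2 ^ n) (δ * 2 ^ (n + 1)) := by
        intro l hl
        rcases le_or_gt l (δ * 2 ^ n) with hle | hgt
        · exact Or.inl ⟨hl.1, hle⟩
        · exact Or.inr ⟨hgt, hl.2⟩
      have hblock := block_bound e α C hC h (a := δ * 2 ^ n) (by positivity)
      have h2a : 2 * (δ * 2 ^ n) = δ * 2 ^ (n + 1) := by ring
      rw [h2a] at hblock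
      have hpow : (δ * 2 ^ n : ℝ) ^ (α - 2) = δ ^ (α - 2) * ((2:ℝ) ^ (α - 2)) ^ n := by
        rw [Real.mul_rpow hδ.le (by positivity), ← Real.rpow_natCast (2:ℝ) n,
          ← Real.rpow_natCast ((2:ℝ) ^ (α - 2)) n, ← Real.rpow_mul (by norm_num),
          ← Real.rpow_mul (by norm_num), mul_comm (n:ℝ)]
      rw [hpow] at hblock
      have hr : (0:ℝ) < (2:ℝ) ^ (α - 2) := Real.rpow_pos_of_pos (by norm_num) _
      calc ∫⁻ l in Set.Ioc δ (δ * 2 ^ (n + 1)), F l ∂e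
          ≤ ∫⁻ l in Set.Ioc δ (δ * 2 ^ n) ∪ Set.Ioc (δ * 2 ^ n) (δ * 2 ^ (n + 1)), F l ∂e :=
            lintegral_mono_set hsub
        _ ≤ (∫⁻ l in Set.Ioc δ (δ * 2 ^ n), F l ∂e) +
            ∫⁻ l in Set.Ioc (δ * 2 ^ n) (δ * 2 ^ (n + 1)), F l ∂e := lintegral_union_le _ _ _
        _ ≤ ENNReal.ofReal (C * 2 ^ (α - 1) * δ ^ (α - 2) *
              ∑ k ∈ Finset.range n, ((2:ℝ) ^ (α - 2)) ^ k) +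
            ENNReal.ofReal (C * 2 ^ (α - 1) * (δ ^ (α - 2) * ((2:ℝ) ^ (α - 2)) ^ n)) :=
            add_le_add ih hblock
        _ = ENNReal.ofReal (C * 2 ^ (α - 1) * δ ^ (α - 2) *
              ∑ k ∈ Finset.range (n + 1), ((2:ℝ) ^ (α - 2)) ^ k) := by
            rw [← ENNReal.ofReal_add (by positivity) (by positivity), Finset.sum_range_succ]
            congr 1; ring

lemma tail_lt2 (hα2 : α < 2) {δ : ℝ} (hδ : 0 < δ) :
    ∫⁻ l in Set.Ioi δ, F l ∂e ≤
      ENNReal.ofReal (C * 2 ^ (α - 1) * δ ^ (α - 2) * (1 - (2:ℝ) ^ (α - 2))⁻¹) := by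
  have hr0 : (0:ℝ) < (2:ℝ) ^ (α - 2) := Real.rpow_pos_of_pos (by norm_num) _
  have hr1 : (2:ℝ) ^ (α - 2) < 1 := by
    rw [← Real.rpow_zero 2]
    exact Real.rpow_lt_rpow_of_exponent_lt (by norm_num) (by linarith)
  have hcover : Set.Ioi δ = ⋃ n : ℕ, Set.Ioc δ (δ * 2 ^ n) := by
    ext l
    simp only [Set.mem_Ioi, Set.mem_iUnion, Set.mem_Ioc]
    constructor
    · intro hl
      obtain ⟨n, hn⟩ := pow_unbounded_of_one_lt (l / δ) (y := (2:ℝ)) (by norm_num)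
      exact ⟨n, hl, by rw [div_lt_iff₀ hδ] at hn; nlinarith⟩
    · rintro ⟨n, hn, -⟩; exact hn
  have hmono : Monotone fun n : ℕ => Set.Ioc δ (δ * 2 ^ n) := by
    intro m n hmn
    apply Set.Ioc_subset_Ioc le_rfl
    have : (2:ℝ) ^ m ≤ 2 ^ n := pow_le_pow_right₀ (by norm_num) hmn
    nlinarith
  have key : ∫⁻ l in Set.Ioi δ, F l ∂e = ⨆ n : ℕ, ∫⁻ l in Set.Ioc δ (δ * 2 ^ n), F l ∂e := by
    have happ : ∀ s : Set ℝ, MeasurableSet s →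
        (e.withDensity F) s = ∫⁻ l in s, F l ∂e := fun s hs => withDensity_apply F hs
    rw [← happ _ measurableSet_Ioi, hcover,
      (hmono.directed_le).measure_iUnion]
    exact iSup_congr fun n => happ _ measurableSet_Ioc
  rw [key]
  refine iSup_le fun n => (chain_bound e α C hC h hδ n).trans ?_
  apply ENNReal.ofReal_le_ofReal
  have hsum : ∑ k ∈ Finset.range n, ((2:ℝ) ^ (α - 2)) ^ k ≤ (1 - (2:ℝ) ^ (α - 2))⁻¹ := by
    refine (Summable.sum_le_tsum (L := SummationFilter.unconditional ℕ) (Finset.range n) (fun _ _ => by positivity) ?_).trans_eq ?_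
    · exact summable_geometric_of_lt_one hr0.le hr1
    · exact tsum_geometric_of_lt_one hr0.le hr1
  have hX : (0:ℝ) ≤ C * 2 ^ (α - 1) * δ ^ (α - 2) := by positivity
  exact mul_le_mul_of_nonneg_left hsum hX

end Dyadic

lemma tail_far (e : Measure ℝ) {b : ℝ} (hb : 1 ≤ b) :
    ∫⁻ l in Set.Ioi b, F l ∂e ≤ e Set.univ := by
  calc ∫⁻ l in Set.Ioi b, F l ∂e ≤ ∫⁻ _ in Set.Ioi b, 1 ∂e := by
        refine setLIntegral_mono measurable_const ?_
        intro l hl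
        have h1 : (1:ℝ≥0∞) ≤ ENNReal.ofReal l := by
          rw [show (1:ℝ≥0∞) = ENNReal.ofReal 1 by simp]
          exact ENNReal.ofReal_le_ofReal (hb.trans hl.le)
        rw [F]
        refine ENNReal.inv_le_one.2 ?_
        calc (1:ℝ≥0∞) = 1 ^ 2 := (one_pow 2).symm
          _ ≤ (ENNReal.ofReal l) ^ 2 := pow_le_pow_left' h1 2
    _ = e (Set.Ioi b) := setLIntegral_one _
    _ ≤ e Set.univ := measure_mono (Set.subset_univ _)

lemma integral_le_of_lintegral_le (e : Measure ℝ) [IsFiniteMeasure e]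
    (he : e (Set.Iio 0) = 0) {t B : ℝ} (ht : 0 < t) (hB : 0 ≤ B)
    (hJ : ∫⁻ l, ENNReal.ofReal ((1 - Real.exp (-l * t)) / (l ^ 2 * t)) ∂e ≤
      ENNReal.ofReal B) :
    ∫ l, (1 - Real.exp (-l * t)) / (l ^ 2 * t) ∂e ≤ B := by
  have hae : ∀ᵐ l ∂e, 0 ≤ l := by
    rw [ae_iff]
    convert he using 2
    ext l; simp [Set.mem_Iio]
  have hnn : ∀ᵐ l ∂e, 0 ≤ (1 - Real.exp (-l * t)) / (l ^ 2 * t) := by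
    filter_upwards [hae] with l hl
    apply div_nonneg _ (by positivity)
    have : Real.exp (-l * t) ≤ 1 := Real.exp_le_one_iff.2 (by nlinarith)
    linarith
  by_cases hint : Integrable (fun l => (1 - Real.exp (-l * t)) / (l ^ 2 * t)) e
  · rw [integral_eq_lintegral_of_nonneg_ae hnn hint.aestronglyMeasurable]
    exact ENNReal.toReal_le_of_le_ofReal hB hJ
  · rw [integral_undef hint]; exact hB

lemma final_bound (e : Measure ℝ) [IsFiniteMeasure e] (he : e (Set.Iio 0) = 0)
    {t δ A B D : ℝ} (ht : 0 < t) (hδ : 0 < δ) (hA : 0 ≤ A) (hB : 0 ≤ B)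
    (hhead : ∫⁻ l in Set.Icc 0 δ, G l ∂e ≤ ENNReal.ofReal A)
    (htail : ∫⁻ l in Set.Ioi δ, F l ∂e ≤ ENNReal.ofReal B)
    (hD : A + t⁻¹ * B ≤ D) :
    ∫ l, (1 - Real.exp (-l * t)) / (l ^ 2 * t) ∂e ≤ D := by
  have hD0 : 0 ≤ D := le_trans (by positivity) hD
  refine integral_le_of_lintegral_le e he ht hD0 ?_
  calc ∫⁻ l, ENNReal.ofReal ((1 - Real.exp (-l * t)) / (l ^ 2 * t)) ∂e
      ≤ (∫⁻ l in Set.Icc 0 δ, G l ∂e) +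
        (ENNReal.ofReal t)⁻¹ * ∫⁻ l in Set.Ioi δ, F l ∂e := split_bound e he ht hδ
    _ ≤ ENNReal.ofReal A + (ENNReal.ofReal t)⁻¹ * ENNReal.ofReal B :=
        add_le_add hhead (mul_le_mul_right htail _)
    _ = ENNReal.ofReal (A + t⁻¹ * B) := by
        rw [← ENNReal.ofReal_inv_of_pos ht, ← ENNReal.ofReal_mul (by positivity),
          ← ENNReal.ofReal_add hA (by positivity)]
    _ ≤ ENNReal.ofReal D := ENNReal.ofReal_le_ofReal hD

lemma tail_split (e : Measure ℝ) {δ : ℝ} (hδ : 0 < δ) {n : ℕ} :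
    ∫⁻ l in Set.Ioi δ, F l ∂e ≤
      (∫⁻ l in Set.Ioc δ (δ * 2 ^ n), F l ∂e) + ∫⁻ l in Set.Ioi (δ * 2 ^ n), F l ∂e := by
  have hsub : Set.Ioi δ ⊆ Set.Ioc δ (δ * 2 ^ n) ∪ Set.Ioi (δ * 2 ^ n) := by
    intro l hl
    rcases le_or_gt l (δ * 2 ^ n) with hle | hgt
    · exact Or.inl ⟨hl, hle⟩
    · exact Or.inr hgt
  exact (lintegral_mono_set hsub).trans (lintegral_union_le _ _ _)


/-- If the spectral measure satisfies `∫_{[0,δ]} λ⁻¹ de(λ) ≤ C δ^{α-1}` for all `δ > 0`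
(which forces `e({0}) = 0`), then `∫ (1 - e^{-λt})/(λ²t) de(λ) ≤ C'/ψ_α(t)` for all `t > 0`. -/
theorem xi_variance_decay
    (e : Measure ℝ) [IsFiniteMeasure e] (he : e (Set.Iio 0) = 0)
    (α : ℝ) (hα : 1 < α) (C : ℝ) (hC : 0 < C)
    (h : ∀ δ : ℝ, 0 < δ →
      ∫⁻ l in Set.Icc (0 : ℝ) δ, (ENNReal.ofReal l)⁻¹ ∂e ≤
        ENNReal.ofReal (C * δ ^ (α - 1))) :
    ∃ C' : ℝ, 0 < C' ∧ ∀ t : ℝ, 0 < t →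
      ∫ l, (1 - Real.exp (-l * t)) / (l ^ 2 * t) ∂e ≤ C' / psi α t := by
  have hMeq : e Set.univ = ENNReal.ofReal (e Set.univ).toReal :=
    (ENNReal.ofReal_toReal (measure_ne_top e _)).symm
  set M := (e Set.univ).toReal with hMdef
  have hM0 : 0 ≤ M := ENNReal.toReal_nonneg
  rcases lt_trichotomy α 2 with hα2 | hα2 | hα2
  · -- α < 2
    have hr0 : (0:ℝ) < 2 ^ (α - 2) := Real.rpow_pos_of_pos two_pos _
    have hr1 : (2:ℝ) ^ (α - 2) < 1 := by
      rw [← Real.rpow_zero 2]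
      exact Real.rpow_lt_rpow_of_exponent_lt (by norm_num) (by linarith)
    have hr1' : (0:ℝ) < 1 - 2 ^ (α - 2) := by linarith
    set K := C * 2 ^ (α - 1) * (1 - 2 ^ (α - 2))⁻¹ with hK
    have hK0 : 0 < K := by positivity
    refine ⟨C + K, by positivity, fun t ht => ?_⟩
    have hψ : psi α t = t ^ (α - 1) := if_pos hα2
    have hδ : 0 < t⁻¹ := inv_pos.2 ht
    refine final_bound e he ht hδ (by positivity) ?_ (h t⁻¹ hδ)
      (tail_lt2 e α C hC h hα2 hδ) ?_
    · positivity
    · have hq : t⁻¹ ^ (α - 1) = (t ^ (α - 1))⁻¹ := Real.inv_rpow ht.le _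
      have h2 : t⁻¹ * t⁻¹ ^ (α - 2) = t⁻¹ ^ (α - 1) := by
        nth_rewrite 1 [← Real.rpow_one t⁻¹]
        rw [← Real.rpow_add (inv_pos.2 ht)]
        congr 1; ring
      refine le_of_eq ?_
      calc C * t⁻¹ ^ (α - 1) + t⁻¹ * (C * 2 ^ (α - 1) * t⁻¹ ^ (α - 2) * (1 - 2 ^ (α - 2))⁻¹)
          = C * t⁻¹ ^ (α - 1) + K * (t⁻¹ * t⁻¹ ^ (α - 2)) := by rw [hK]; ring
        _ = (C + K) * t⁻¹ ^ (α - 1) := by rw [h2]; ring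
        _ = (C + K) / psi α t := by rw [hψ, hq, div_eq_mul_inv]
  · -- α = 2
    subst hα2
    have hlog2 : 0 < Real.log 2 := Real.log_pos one_lt_two
    refine ⟨4 * C + 2 * M + 2 * C / Real.log 2, by positivity, fun t ht => ?_⟩
    have hψ : psi 2 t = t / max 1 (Real.log t) := by simp [psi]
    rcases le_or_gt t 1 with ht1 | ht1
    · -- t ≤ 1
      have hmax : max 1 (Real.log t) = 1 :=
        max_eq_left ((Real.log_nonpos ht.le ht1).trans zero_le_one)
      refine final_bound e he ht one_pos (by positivity) hM0 (h 1 one_pos)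
        (hMeq ▸ tail_far e le_rfl) ?_
      rw [hψ, hmax, div_one, le_div_iff₀ ht, Real.one_rpow]
      have hexp : (C * 1 + t⁻¹ * M) * t = C * t + M := by field_simp
      rw [hexp]
      nlinarith [mul_le_of_le_one_right hC.le ht1,
        div_nonneg (by linarith : (0:ℝ) ≤ 2 * C) hlog2.le]
    · -- 1 < t
      set n := ⌈Real.logb 2 t⌉₊ with hn
      have hlogb0 : 0 ≤ Real.logb 2 t := (Real.logb_pos one_lt_two ht1).le
      have htn : t ≤ 2 ^ n := by
        calc t = 2 ^ Real.logb 2 t :=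
              (Real.rpow_logb two_pos (by norm_num) (by linarith)).symm
          _ ≤ 2 ^ ((n : ℝ)) :=
              Real.rpow_le_rpow_of_exponent_le one_le_two (Nat.le_ceil _)
          _ = 2 ^ n := Real.rpow_natCast 2 n
      have hδ : (0:ℝ) < t⁻¹ := inv_pos.2 ht
      have hchain := chain_bound e 2 C hC h hδ n
      have hsimp : C * 2 ^ ((2:ℝ) - 1) * t⁻¹ ^ ((2:ℝ) - 2) *
          (∑ k ∈ Finset.range n, ((2:ℝ) ^ ((2:ℝ) - 2)) ^ k) = 2 * C * n := by
        simp only [show (2:ℝ) - 1 = 1 from by norm_num, show (2:ℝ) - 2 = 0 from by norm_num,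
          Real.rpow_one, Real.rpow_zero, one_pow, Finset.sum_const, Finset.card_range,
          nsmul_eq_mul, mul_one]
        ring
      rw [hsimp] at hchain
      have htail : ∫⁻ l in Set.Ioi t⁻¹, F l ∂e ≤ ENNReal.ofReal (2 * C * n + M) := by
        calc ∫⁻ l in Set.Ioi t⁻¹, F l ∂e
            ≤ (∫⁻ l in Set.Ioc t⁻¹ (t⁻¹ * 2 ^ n), F l ∂e) +
              ∫⁻ l in Set.Ioi (t⁻¹ * 2 ^ n), F l ∂e := tail_split e hδ
          _ ≤ ENNReal.ofReal (2 * C * n) + ENNReal.ofReal M := by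
              refine add_le_add hchain ?_
              refine (tail_far e ?_).trans_eq hMeq
              rw [show t⁻¹ * 2 ^ n = 2 ^ n / t by ring, le_div_iff₀ ht, one_mul]
              exact htn
          _ = ENNReal.ofReal (2 * C * n + M) := by
              rw [← ENNReal.ofReal_add (by positivity) hM0]
      refine final_bound e he ht hδ (by positivity) (by positivity) (h t⁻¹ hδ) htail ?_
      have hA : C * t⁻¹ ^ ((2:ℝ) - 1) = C * t⁻¹ := by norm_num
      rw [hA, hψ]
      set L := max 1 (Real.log t) with hL
      have hL1 : (1:ℝ) ≤ L := le_max_left _ _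
      have hLt : Real.log t ≤ L := le_max_right _ _
      have hL0 : (0:ℝ) < L := lt_of_lt_of_le one_pos hL1
      have hrhs : (4 * C + 2 * M + 2 * C / Real.log 2) / (t / L) =
          (4 * C + 2 * M + 2 * C / Real.log 2) * L / t := div_div_eq_mul_div _ _ _
      rw [hrhs]
      have hlhs : C * t⁻¹ + t⁻¹ * (2 * C * n + M) = (C + (2 * C * n + M)) / t := by
        field_simp
      rw [hlhs, div_le_div_iff_of_pos_right ht]
      have hnle : (n : ℝ) ≤ Real.log t / Real.log 2 + 1 := by
        have := Nat.ceil_lt_add_one hlogb0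
        rw [Real.logb] at this
        exact this.le
      calc C + (2 * C * (n:ℝ) + M)
          ≤ C + (2 * C * (Real.log t / Real.log 2 + 1) + M) := by
            have := mul_le_mul_of_nonneg_left hnle (by linarith : (0:ℝ) ≤ 2 * C)
            linarith
        _ = (3 * C + M) + (2 * C / Real.log 2) * Real.log t := by
            field_simp
            ring
        _ ≤ (3 * C + M) * L + (2 * C / Real.log 2) * L :=
            add_le_add (le_mul_of_one_le_right (by linarith) hL1)
              (mul_le_mul_of_nonneg_left hLt (by positivity))
        _ ≤ (4 * C + 2 * M + 2 * C / Real.log 2) * L := by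
            have hd : (0:ℝ) ≤ (C + M) * L := mul_nonneg (by linarith) (by linarith)
            have hexp : (4 * C + 2 * M + 2 * C / Real.log 2) * L =
                (3 * C + M) * L + (2 * C / Real.log 2) * L + (C + M) * L := by ring
            linarith
  · -- α > 2
    have hr1 : (1:ℝ) < 2 ^ (α - 2) := by
      rw [← Real.rpow_zero 2]
      exact Real.rpow_lt_rpow_of_exponent_lt (by norm_num) (by linarith)
    have hr0 : (0:ℝ) < 2 ^ (α - 2) - 1 := by linarith
    set K2 := C * 2 ^ (α - 1) * 2 ^ (α - 2) * (2 ^ (α - 2) - 1)⁻¹ with hK2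
    have hK20 : 0 < K2 := by positivity
    refine ⟨2 * C + 2 * M + K2, by positivity, fun t ht => ?_⟩
    have hψ : psi α t = t := by
      rw [psi, if_neg (by linarith), if_neg (by linarith)]
    rw [hψ]
    rcases le_or_gt t 1 with ht1 | ht1
    · -- t ≤ 1
      refine final_bound e he ht one_pos (by positivity) hM0 (h 1 one_pos)
        (hMeq ▸ tail_far e le_rfl) ?_
      rw [Real.one_rpow, le_div_iff₀ ht]
      have hexp : (C * 1 + t⁻¹ * M) * t = C * t + M := by field_simp
      rw [hexp]
      nlinarith [mul_le_of_le_one_right hC.le ht1]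
    · -- 1 < t
      set n := ⌈Real.logb 2 t⌉₊ with hn
      have hlogb0 : 0 ≤ Real.logb 2 t := (Real.logb_pos one_lt_two ht1).le
      have htn : t ≤ 2 ^ n := by
        calc t = 2 ^ Real.logb 2 t :=
              (Real.rpow_logb two_pos (by norm_num) (by linarith)).symm
          _ ≤ 2 ^ ((n : ℝ)) :=
              Real.rpow_le_rpow_of_exponent_le one_le_two (Nat.le_ceil _)
          _ = 2 ^ n := Real.rpow_natCast 2 n
      have h2n : (2:ℝ) ^ n ≤ 2 * t := by
        calc (2:ℝ) ^ n = 2 ^ ((n:ℝ)) := (Real.rpow_natCast 2 n).symm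
          _ ≤ 2 ^ (Real.logb 2 t + 1) :=
              Real.rpow_le_rpow_of_exponent_le one_le_two
                (Nat.ceil_lt_add_one hlogb0).le
          _ = 2 * t := by
              rw [Real.rpow_add two_pos, Real.rpow_logb two_pos (by norm_num) (by linarith),
                Real.rpow_one]
              ring
      have hδ : (0:ℝ) < t⁻¹ := inv_pos.2 ht
      have htp : (0:ℝ) < t ^ (α - 2) := Real.rpow_pos_of_pos ht _
      have hgeo : ∑ k ∈ Finset.range n, ((2:ℝ) ^ (α - 2)) ^ k ≤
          ((2:ℝ) ^ (α - 2)) ^ n * (2 ^ (α - 2) - 1)⁻¹ := by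
        rw [geom_sum_eq (by intro hh; rw [hh] at hr1; linarith : (2:ℝ) ^ (α - 2) ≠ 1),
          ← div_eq_mul_inv]
        gcongr
        linarith
      have hrn : ((2:ℝ) ^ (α - 2)) ^ n ≤ 2 ^ (α - 2) * t ^ (α - 2) := by
        have h1 : ((2:ℝ) ^ (α - 2)) ^ n = ((2:ℝ) ^ n) ^ (α - 2) := by
          rw [← Real.rpow_natCast ((2:ℝ) ^ (α - 2)) n, ← Real.rpow_natCast (2:ℝ) n,
            ← Real.rpow_mul (by norm_num), ← Real.rpow_mul (by norm_num), mul_comm]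
        rw [h1, ← Real.mul_rpow (by norm_num) ht.le]
        exact Real.rpow_le_rpow (by positivity) h2n (by linarith)
      have hBle : C * 2 ^ (α - 1) * t⁻¹ ^ (α - 2) *
          (∑ k ∈ Finset.range n, ((2:ℝ) ^ (α - 2)) ^ k) ≤ K2 := by
        have h1 : t⁻¹ ^ (α - 2) = (t ^ (α - 2))⁻¹ := Real.inv_rpow ht.le _
        calc C * 2 ^ (α - 1) * t⁻¹ ^ (α - 2) *
              (∑ k ∈ Finset.range n, ((2:ℝ) ^ (α - 2)) ^ k)
            ≤ C * 2 ^ (α - 1) * t⁻¹ ^ (α - 2) *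
              (((2:ℝ) ^ (α - 2)) ^ n * (2 ^ (α - 2) - 1)⁻¹) := by
              refine mul_le_mul_of_nonneg_left hgeo (by positivity)
          _ ≤ C * 2 ^ (α - 1) * t⁻¹ ^ (α - 2) *
              ((2 ^ (α - 2) * t ^ (α - 2)) * (2 ^ (α - 2) - 1)⁻¹) := by
              refine mul_le_mul_of_nonneg_left
                (mul_le_mul_of_nonneg_right hrn (by positivity)) (by positivity)
          _ = K2 := by
              rw [h1, hK2]
              field_simp
      have hchain := (chain_bound e α C hC h hδ n).trans (ENNReal.ofReal_le_ofReal hBle)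
      have htail : ∫⁻ l in Set.Ioi t⁻¹, F l ∂e ≤ ENNReal.ofReal (K2 + M) := by
        calc ∫⁻ l in Set.Ioi t⁻¹, F l ∂e
            ≤ (∫⁻ l in Set.Ioc t⁻¹ (t⁻¹ * 2 ^ n), F l ∂e) +
              ∫⁻ l in Set.Ioi (t⁻¹ * 2 ^ n), F l ∂e := tail_split e hδ
          _ ≤ ENNReal.ofReal K2 + ENNReal.ofReal M := by
              refine add_le_add hchain ?_
              refine (tail_far e ?_).trans_eq hMeq
              rw [show t⁻¹ * 2 ^ n = 2 ^ n / t by ring, le_div_iff₀ ht, one_mul]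
              exact htn
          _ = ENNReal.ofReal (K2 + M) := by
              rw [← ENNReal.ofReal_add hK20.le hM0]
      refine final_bound e he ht hδ (by positivity) (by positivity) (h t⁻¹ hδ) htail ?_
      have hA : C * t⁻¹ ^ (α - 1) ≤ C * t⁻¹ := by
        refine mul_le_mul_of_nonneg_left ?_ hC.le
        rw [Real.inv_rpow ht.le]
        refine inv_anti₀ ht ?_
        calc t = t ^ (1:ℝ) := (Real.rpow_one t).symm
          _ ≤ t ^ (α - 1) := Real.rpow_le_rpow_of_exponent_le ht1.le (by linarith)
      calc C * t⁻¹ ^ (α - 1) + t⁻¹ * (K2 + M)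
          ≤ C * t⁻¹ + t⁻¹ * (K2 + M) := by linarith
        _ ≤ (2 * C + 2 * M + K2) / t := by
            rw [div_eq_mul_inv]
            nlinarith [hδ]
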